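/- For all partial multifunctions f,g on ℕ with g computably transparent and inflationary, f ≤_m g if and only if f ≤_pW g. Moreover, every partial multifunction f satisfies f ≤_pW pWeih(f) and pWeih(f) ≤_pW f, and pWeih(f) is computably transparent and inflationary. Hence the poset of many-one degrees of computably transparent, inflationary partial multifunctions on ℕ is isomorphic to the pointed Weihrauch degrees. -/

import Mathlib

namespace KleeneOracle

/-- `e ∗ x`: application of the `e`-th partial computable function on ℕ. -/
def ap (e x : ℕ) : Part ℕ :=
  Nat.Partrec.Code.eval (Denumerable.ofNat Nat.Partrec.Code e) x

/-- `e ∗ A := {e ∗ a : a ∈ A}`. -/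
def apSet (e : ℕ) (A : Set ℕ) : Set ℕ := {z | ∃ a ∈ A, z ∈ ap e a}

/-- A partial multifunction on ℕ. -/
abbrev Multifun := ℕ → Part (Set ℕ)

def Transparent (U : Multifun) : Prop :=
  ∃ u : ℕ, ∀ (e x : ℕ) (A : Set ℕ), A ∈ U x → (∀ y ∈ A, (ap e y).Dom) →
    ∃ c ∈ ap u e, ∃ d ∈ ap c x, ∃ B ∈ U d, B ⊆ apSet e A

def Inflationary (U : Multifun) : Prop :=
  ∃ η : ℕ, ∀ x : ℕ, ∃ c ∈ ap η x, ∃ B ∈ U c, B ⊆ {x}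

def mcomp (g f : Multifun) : Multifun := fun x =>
  ⟨∃ A ∈ f x, ∀ y ∈ A, (g y).Dom,
   fun _ => {z | ∃ A ∈ f x, ∃ y ∈ A, ∃ B ∈ g y, z ∈ B}⟩

def Idempotent (U : Multifun) : Prop :=
  ∃ μ : ℕ, ∀ (x : ℕ) (A : Set ℕ), A ∈ mcomp U U x →
    ∃ c ∈ ap μ x, ∃ B ∈ U c, B ⊆ A

def mRed (f g : Multifun) : Prop :=
  ∃ e : ℕ, ∀ (x : ℕ) (A : Set ℕ), A ∈ f x →
    ∃ c ∈ ap e x, ∃ B ∈ g c, B ⊆ A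

def wRed (f g : Multifun) : Prop :=
  ∃ em ep : ℕ, ∀ (x : ℕ) (A : Set ℕ), A ∈ f x →
    ∃ c ∈ ap em x, ∃ B ∈ g c, ∀ y ∈ B, ∃ z ∈ ap ep (Nat.pair x y), z ∈ A

def Weih (g : Multifun) : Multifun := fun w =>
  ⟨∃ c ∈ ap w.unpair.1 w.unpair.2.unpair.2, ∃ B ∈ g c,
     ∀ y ∈ B, (ap w.unpair.2.unpair.1 (Nat.pair w.unpair.2.unpair.2 y)).Dom,
   fun _ => {z | ∃ c ∈ ap w.unpair.1 w.unpair.2.unpair.2, ∃ B ∈ g c,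
     ∃ y ∈ B, z ∈ ap w.unpair.2.unpair.1 (Nat.pair w.unpair.2.unpair.2 y)}⟩

def idsq (g : Multifun) : Multifun := fun w =>
  if w.unpair.1 = 0 then Part.some {w.unpair.2}
  else if w.unpair.1 = 1 then g w.unpair.2
  else Part.none

def pWeih (g : Multifun) : Multifun := Weih (idsq g)

def pwRed (f g : Multifun) : Prop := wRed f (idsq g)

def Med (Q : Set ℕ) : Multifun := fun e =>
  ⟨∀ a ∈ Q, (ap e a).Dom, fun _ => apSet e Q⟩

def MedRed (P Q : Set ℕ) : Prop :=
  ∃ e : ℕ, (∀ a ∈ Q, (ap e a).Dom) ∧ apSet e Q ⊆ P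

def constMF (P : Set ℕ) : Multifun := fun _ => Part.some P

def imp (p q : Set ℕ) : Set ℕ := {e | ∀ x ∈ p, ∃ z ∈ ap e x, z ∈ q}

def OpMonotone (j : Set ℕ → Set ℕ) : Prop :=
  ∃ u : ℕ, ∀ p q : Set ℕ, ∀ a ∈ imp p q, ∃ c ∈ ap u a, c ∈ imp (j p) (j q)

def OpInflationary (j : Set ℕ → Set ℕ) : Prop :=
  ∃ e : ℕ, ∀ p : Set ℕ, e ∈ imp p (j p)

def OpIdempotent (j : Set ℕ → Set ℕ) : Prop :=
  ∃ e : ℕ, ∀ p : Set ℕ, e ∈ imp (j (j p)) (j p)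

def LawvereTierney (j : Set ℕ → Set ℕ) : Prop :=
  OpMonotone j ∧ OpInflationary j ∧ OpIdempotent j

def jU (U : Multifun) (p : Set ℕ) : Set ℕ := {x | ∃ A ∈ U x, A ⊆ p}

def SingleValued (U : Multifun) : Prop := ∀ x : ℕ, ∀ A ∈ U x, ∃ y : ℕ, A = {y}

def presInter (j : Set ℕ → Set ℕ) : Prop :=
  ∀ (ι : Type) [Nonempty ι] (p : ι → Set ℕ), j (⋂ i, p i) = ⋂ i, j (p i)

def presUnion (j : Set ℕ → Set ℕ) : Prop :=
  ∀ (ι : Type) (p : ι → Set ℕ), j (⋃ i, p i) = ⋃ i, j (p i)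

def Uop (j : Set ℕ → Set ℕ) : Multifun := fun x =>
  ⟨∃ p : Set ℕ, x ∈ j p, fun _ => ⋂₀ {p : Set ℕ | x ∈ j p}⟩

def mMorphism (e : ℕ) (f g : Multifun) : Prop :=
  ∀ (x : ℕ) (A : Set ℕ), A ∈ f x → ∃ c ∈ ap e x, ∃ B ∈ g c, B ⊆ A

def rMorphism (e : ℕ) (j k : Set ℕ → Set ℕ) : Prop :=
  ∀ p : Set ℕ, e ∈ imp (j p) (k p)

def rRed (j k : Set ℕ → Set ℕ) : Prop := ∃ e : ℕ, rMorphism e j k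


section Helpers
open Nat.Partrec Nat.Partrec.Code

lemma ap_partrec : Partrec₂ ap :=
  eval_part.comp ((Computable.ofNat Code).comp Computable.fst) Computable.snd

lemma exists_code_ap {F : ℕ →. ℕ} (hF : Partrec F) : ∃ e : ℕ, ∀ x, ap e x = F x := by
  obtain ⟨c, hc⟩ := exists_code.1 (Partrec.nat_iff.1 hF)
  exact ⟨Encodable.encode c, fun x => by simp [ap, Denumerable.ofNat_encode, hc]⟩

lemma smn {F : ℕ → ℕ →. ℕ} (hF : Partrec₂ F) :
    ∃ k : ℕ → ℕ, Computable k ∧ ∀ x y, ap (k x) y = F x y := by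
  have hG : Partrec fun n : ℕ => F n.unpair.1 n.unpair.2 :=
    hF.comp (Computable.fst.comp Computable.unpair) (Computable.snd.comp Computable.unpair)
  obtain ⟨c, hc⟩ := exists_code.1 (Partrec.nat_iff.1 hG)
  refine ⟨fun x => Encodable.encode (c.curry x), ?_, fun x y => ?_⟩
  · exact Primrec.to_comp (Primrec.encode.comp (primrec₂_curry.comp (Primrec.const c) Primrec.id))
  · simp [ap, Denumerable.ofNat_encode, eval_curry, hc]

lemma mem_weih {g : Multifun} {w : ℕ} {A : Set ℕ} :
    A ∈ Weih g w ↔ ((∃ c ∈ ap w.unpair.1 w.unpair.2.unpair.2, ∃ B ∈ g c,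
       ∀ y ∈ B, (ap w.unpair.2.unpair.1 (Nat.pair w.unpair.2.unpair.2 y)).Dom) ∧
     A = {z | ∃ c ∈ ap w.unpair.1 w.unpair.2.unpair.2, ∃ B ∈ g c,
       ∃ y ∈ B, z ∈ ap w.unpair.2.unpair.1 (Nat.pair w.unpair.2.unpair.2 y)}) := by
  constructor
  · rintro ⟨h, rfl⟩; exact ⟨h, rfl⟩
  · rintro ⟨h, rfl⟩; exact ⟨h, rfl⟩

lemma idsq_pair0 (g : Multifun) (x : ℕ) : idsq g (Nat.pair 0 x) = Part.some {x} := by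
  simp [idsq]

lemma idsq_pair1 (g : Multifun) (x : ℕ) : idsq g (Nat.pair 1 x) = g x := by
  simp [idsq]

lemma mem_idsq_cases {g : Multifun} {c : ℕ} {B : Set ℕ} (h : B ∈ idsq g c) :
    (c.unpair.1 = 0 ∧ B = {c.unpair.2}) ∨ (c.unpair.1 = 1 ∧ B ∈ g c.unpair.2) := by
  unfold idsq at h
  split_ifs at h with h0 h1
  · exact Or.inl ⟨h0, by rw [← Part.mem_some_iff.1 h]⟩
  · exact Or.inr ⟨h1, h⟩
  · exact absurd h (Part.notMem_none _)

lemma mRed_to_pwRed {f g : Multifun} (h : mRed f g) : pwRed f g := by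
  obtain ⟨e, he⟩ := h
  obtain ⟨em, hem⟩ := exists_code_ap
    ((ap_partrec.comp (Computable.const e) Computable.id).map
      ((Primrec₂.natPair.comp (Primrec.const 1) Primrec.snd).to_comp.to₂ :
        Computable₂ fun _ c : ℕ => Nat.pair 1 c))
  obtain ⟨ep, hep⟩ := exists_code_ap
    (Computable.partrec (Computable.snd.comp Computable.unpair))
  refine ⟨em, ep, fun x A hA => ?_⟩
  obtain ⟨c, hc, B, hB, hBA⟩ := he x A hA
  refine ⟨Nat.pair 1 c, ?_, B, ?_, fun y hy => ⟨y, ?_, hBA hy⟩⟩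
  · rw [hem]; exact Part.mem_map _ hc
  · rw [idsq_pair1]; exact hB
  · simp [hep]

end Helpers
section Main
open Nat.Partrec Nat.Partrec.Code

lemma pwRed_to_mRed {f g : Multifun} (hT : Transparent g) (hI : Inflationary g)
    (h : pwRed f g) : mRed f g := by
  obtain ⟨u, hu⟩ := hT
  obtain ⟨η, hη⟩ := hI
  obtain ⟨em, ep, he⟩ := h
  obtain ⟨k, hkc, hk⟩ := smn (F := fun x y => ap ep (Nat.pair x y))
    (ap_partrec.comp (Computable.const ep)
      (Primrec₂.natPair.to_comp.comp Computable.fst Computable.snd))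
  have hcond : Partrec₂ fun x w : ℕ =>
      if w.unpair.1 = 0 then (ap ep (Nat.pair x w.unpair.2)).bind (ap η)
      else (ap u (k x)).bind fun t => ap t w.unpair.2 := by
    have hb : Computable fun p : ℕ × ℕ => decide (p.2.unpair.1 = 0) :=
      (primrecPred_iff_primrec_decide.1 (Primrec.eq.comp (Primrec.fst.comp (Primrec.unpair.comp Primrec.snd))
        (Primrec.const 0))).to_comp
    have hp1 : Partrec fun p : ℕ × ℕ => (ap ep (Nat.pair p.1 p.2.unpair.2)).bind (ap η) :=
      (ap_partrec.comp (Computable.const ep)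
        (Primrec₂.natPair.to_comp.comp Computable.fst
          (Computable.snd.comp (Computable.unpair.comp Computable.snd)))).bind
        ((ap_partrec.comp (Computable.const η) Computable.snd).to₂)
    have hp2 : Partrec fun p : ℕ × ℕ => (ap u (k p.1)).bind fun t => ap t p.2.unpair.2 :=
      (ap_partrec.comp (Computable.const u) (hkc.comp Computable.fst)).bind
        ((ap_partrec.comp Computable.snd
          (Computable.snd.comp (Computable.unpair.comp
            (Computable.snd.comp Computable.fst)))).to₂)
    exact ((Partrec.cond hb hp1 hp2).of_eq fun p => by
      by_cases hz : p.2.unpair.1 = 0 <;> simp [hz])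
  obtain ⟨e, hE⟩ := exists_code_ap
    ((ap_partrec.comp (Computable.const em) Computable.id).bind hcond)
  refine ⟨e, fun x A hA => ?_⟩
  obtain ⟨c, hc, B, hB, hBA⟩ := he x A hA
  rcases mem_idsq_cases hB with ⟨h0, rfl⟩ | ⟨h1, hBg⟩
  · obtain ⟨z, hz, hzA⟩ := hBA c.unpair.2 rfl
    obtain ⟨c2, hc2, B2, hB2, hB2s⟩ := hη z
    refine ⟨c2, ?_, B2, hB2, fun b hb => ?_⟩
    · rw [hE]
      refine Part.mem_bind_iff.2 ⟨c, hc, ?_⟩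
      simp only [h0, if_pos]
      exact Part.mem_bind_iff.2 ⟨z, hz, hc2⟩
    · have := hB2s hb
      rw [Set.mem_singleton_iff] at this
      rwa [this]
  · have hdom : ∀ y ∈ B, (ap (k x) y).Dom := fun y hy => by
      rw [hk]; obtain ⟨z, hz, _⟩ := hBA y hy; exact Part.dom_iff_mem.2 ⟨z, hz⟩
    obtain ⟨c2, hc2, d, hd, B2, hB2, hB2s⟩ := hu (k x) c.unpair.2 B hBg hdom
    refine ⟨d, ?_, B2, hB2, fun b hb => ?_⟩
    · rw [hE]
      refine Part.mem_bind_iff.2 ⟨c, hc, ?_⟩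
      simp only [h1, if_neg (one_ne_zero)]
      exact Part.mem_bind_iff.2 ⟨c2, hc2, hd⟩
    · obtain ⟨y, hy, hbz⟩ := hB2s hb
      obtain ⟨z, hz, hzA⟩ := hBA y hy
      rw [hk] at hbz
      rwa [Part.mem_unique hbz hz]

end Main
section Main2
open Nat.Partrec Nat.Partrec.Code

lemma pwRed_f_pWeih (f : Multifun) : pwRed f (pWeih f) := by
  obtain ⟨h1, hh1⟩ := exists_code_ap (F := fun x => Part.some (Nat.pair 1 x))
    (Computable.partrec (Primrec.to_comp (Primrec₂.natPair.comp (Primrec.const 1) Primrec.id)))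
  obtain ⟨k1, hk1⟩ := exists_code_ap (F := fun p => Part.some p.unpair.2)
    (Computable.partrec (Computable.snd.comp Computable.unpair))
  obtain ⟨em, hem⟩ := exists_code_ap
    (F := fun x => Part.some (Nat.pair 1 (Nat.pair h1 (Nat.pair k1 x))))
    (Computable.partrec (Primrec.to_comp (Primrec₂.natPair.comp (Primrec.const 1)
      (Primrec₂.natPair.comp (Primrec.const h1)
        (Primrec₂.natPair.comp (Primrec.const k1) Primrec.id)))))
  refine ⟨em, k1, fun x A hA => ?_⟩
  refine ⟨Nat.pair 1 (Nat.pair h1 (Nat.pair k1 x)), by rw [hem]; exact Part.mem_some _, ?_⟩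
  rw [idsq_pair1]
  refine ⟨_, mem_weih.2 ⟨?_, rfl⟩, ?_⟩
  · refine ⟨Nat.pair 1 x, ?_, A, ?_, fun y _ => ?_⟩
    · simp [hh1]
    · rw [idsq_pair1]; exact hA
    · simp [hk1]
  · rintro z ⟨c, hc, B, hB, y, hy, hz⟩
    simp only [Nat.unpair_pair] at hc hB hz
    rw [hh1] at hc
    rw [Part.mem_some_iff] at hc
    subst hc
    rw [idsq_pair1] at hB
    have hBA : B = A := Part.mem_unique hB hA
    subst hBA
    simp [hk1] at hz
    subst hz
    exact ⟨z, by simp [hk1], hy⟩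

lemma inflationary_pWeih (f : Multifun) : Inflationary (pWeih f) := by
  obtain ⟨h0, hh0⟩ := exists_code_ap (F := fun _ => Part.some (Nat.pair 0 0))
    (Computable.partrec (Computable.const (Nat.pair 0 0)))
  obtain ⟨k0, hk0⟩ := exists_code_ap (F := fun p => Part.some p.unpair.1)
    (Computable.partrec (Computable.fst.comp Computable.unpair))
  obtain ⟨η, hη⟩ := exists_code_ap (F := fun x => Part.some (Nat.pair h0 (Nat.pair k0 x)))
    (Computable.partrec (Primrec.to_comp (Primrec₂.natPair.comp (Primrec.const h0)
      (Primrec₂.natPair.comp (Primrec.const k0) Primrec.id))))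
  refine ⟨η, fun x => ⟨Nat.pair h0 (Nat.pair k0 x), by rw [hη]; exact Part.mem_some _, ?_⟩⟩
  refine ⟨_, mem_weih.2 ⟨?_, rfl⟩, ?_⟩
  · refine ⟨Nat.pair 0 0, ?_, {0}, ?_, fun y _ => ?_⟩
    · simp [hh0]
    · rw [idsq_pair0]; exact Part.mem_some _
    · simp [hk0]
  · rintro z ⟨c, hc, B, hB, y, hy, hz⟩
    simp only [Nat.unpair_pair] at hc hB hz
    rw [hh0, Part.mem_some_iff] at hc
    subst hc
    simp [hk0] at hz
    subst hz
    rfl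

end Main2
section Main3
open Nat.Partrec Nat.Partrec.Code

private lemma cu1 : Computable fun n : ℕ => n.unpair.1 :=
  Computable.fst.comp Computable.unpair
private lemma cu2 : Computable fun n : ℕ => n.unpair.2 :=
  Computable.snd.comp Computable.unpair
private lemma cpair : Computable₂ Nat.pair := Primrec₂.natPair.to_comp

lemma pwRed_pWeih_f (f : Multifun) : pwRed (pWeih f) f := by
  have hembind : Partrec₂ fun w c : ℕ =>
      if c.unpair.1 = 0 then
        (ap w.unpair.2.unpair.1 (Nat.pair w.unpair.2.unpair.2 c.unpair.2)).map (Nat.pair 0)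
      else Part.some (Nat.pair 1 c.unpair.2) := by
    have hb : Computable fun p : ℕ × ℕ => decide (p.2.unpair.1 = 0) :=
      (primrecPred_iff_primrec_decide.1 (Primrec.eq.comp (Primrec.fst.comp (Primrec.unpair.comp Primrec.snd))
        (Primrec.const 0))).to_comp
    have hbr1 : Partrec fun p : ℕ × ℕ =>
        (ap p.1.unpair.2.unpair.1 (Nat.pair p.1.unpair.2.unpair.2 p.2.unpair.2)).map
          (Nat.pair 0) :=
      (ap_partrec.comp ((cu1.comp cu2).comp Computable.fst)
        (cpair.comp ((cu2.comp cu2).comp Computable.fst) (cu2.comp Computable.snd))).map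
        (((Primrec₂.natPair.comp (Primrec.const 0) Primrec.snd).to_comp).to₂)
    have hbr2 : Partrec fun p : ℕ × ℕ => Part.some (Nat.pair 1 p.2.unpair.2) :=
      Computable.partrec ((Primrec₂.natPair.comp (Primrec.const 1)
        (Primrec.snd.comp (Primrec.unpair.comp Primrec.snd))).to_comp)
    exact (Partrec.cond hb hbr1 hbr2).of_eq fun p => by
      by_cases hz : p.2.unpair.1 = 0 <;> simp [hz]
  obtain ⟨em, hem⟩ := exists_code_ap
    ((ap_partrec.comp cu1 (cu2.comp cu2)).bind hembind)
  have hepbind : Partrec₂ fun p c : ℕ =>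
      if c.unpair.1 = 0 then Part.some p.unpair.2
      else ap p.unpair.1.unpair.2.unpair.1
        (Nat.pair p.unpair.1.unpair.2.unpair.2 p.unpair.2) := by
    have hb : Computable fun q : ℕ × ℕ => decide (q.2.unpair.1 = 0) :=
      (primrecPred_iff_primrec_decide.1 (Primrec.eq.comp (Primrec.fst.comp (Primrec.unpair.comp Primrec.snd))
        (Primrec.const 0))).to_comp
    have hbr1 : Partrec fun q : ℕ × ℕ => Part.some q.1.unpair.2 :=
      Computable.partrec (cu2.comp Computable.fst)
    have hbr2 : Partrec fun q : ℕ × ℕ =>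
        ap q.1.unpair.1.unpair.2.unpair.1
          (Nat.pair q.1.unpair.1.unpair.2.unpair.2 q.1.unpair.2) :=
      ap_partrec.comp ((cu1.comp (cu2.comp cu1)).comp Computable.fst)
        (cpair.comp ((cu2.comp (cu2.comp cu1)).comp Computable.fst)
          (cu2.comp Computable.fst))
    exact (Partrec.cond hb hbr1 hbr2).of_eq fun q => by
      by_cases hz : q.2.unpair.1 = 0 <;> simp [hz]
  obtain ⟨ep, hep⟩ := exists_code_ap
    ((ap_partrec.comp (cu1.comp cu1) ((cu2.comp cu2).comp cu1)).bind hepbind)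
  refine ⟨em, ep, fun w A hA => ?_⟩
  obtain ⟨⟨c, hc, B, hB, hdom⟩, rfl⟩ := mem_weih.1 hA
  rcases mem_idsq_cases hB with ⟨h0, hBs⟩ | ⟨h1, hBf⟩
  · subst hBs
    have hkd := hdom c.unpair.2 rfl
    have hz0 := Part.get_mem hkd
    refine ⟨Nat.pair 0 ((ap _ _).get hkd), ?_,
      {(ap _ _).get hkd}, by rw [idsq_pair0]; exact Part.mem_some _, ?_⟩
    · rw [hem]
      refine Part.mem_bind_iff.2 ⟨c, hc, ?_⟩
      rw [if_pos h0]
      exact Part.mem_map _ hz0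
    · rintro y hy
      rw [Set.mem_singleton_iff] at hy
      subst hy
      refine ⟨(ap _ _).get hkd, ?_, ⟨c, hc, _, hB, c.unpair.2, rfl, hz0⟩⟩
      rw [hep]
      simp only [Nat.unpair_pair]
      exact Part.mem_bind_iff.2 ⟨c, hc, by rw [if_pos h0]; exact Part.mem_some _⟩
  · refine ⟨Nat.pair 1 c.unpair.2, ?_, B, by rw [idsq_pair1]; exact hBf, ?_⟩
    · rw [hem]
      refine Part.mem_bind_iff.2 ⟨c, hc, ?_⟩
      rw [h1, if_neg Nat.one_ne_zero]
      exact Part.mem_some _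
    · intro y hy
      have hd := hdom y hy
      refine ⟨(ap _ _).get hd, ?_, ⟨c, hc, B, hB, y, hy, Part.get_mem hd⟩⟩
      rw [hep]
      simp only [Nat.unpair_pair]
      refine Part.mem_bind_iff.2 ⟨c, hc, ?_⟩
      rw [h1, if_neg Nat.one_ne_zero]
      exact Part.get_mem hd

lemma transparent_pWeih (f : Multifun) : Transparent (pWeih f) := by
  obtain ⟨h', hh'⟩ := exists_code_ap (F := fun w => ap w.unpair.1 w.unpair.2.unpair.2)
    (ap_partrec.comp cu1 (cu2.comp cu2))
  have hKpart : Partrec₂ fun e p : ℕ =>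
      (ap p.unpair.1.unpair.2.unpair.1
        (Nat.pair p.unpair.1.unpair.2.unpair.2 p.unpair.2)).bind (ap e) :=
    (ap_partrec.comp ((cu1.comp (cu2.comp cu1)).comp Computable.snd)
      (cpair.comp ((cu2.comp (cu2.comp cu1)).comp Computable.snd)
        (cu2.comp Computable.snd))).bind
      ((ap_partrec.comp (Computable.fst.comp Computable.fst) Computable.snd).to₂)
  obtain ⟨K, hKc, hK⟩ := smn hKpart
  have hk2part : Partrec₂ fun e w : ℕ => Part.some (Nat.pair h' (Nat.pair (K e) w)) :=
    Computable₂.partrec₂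
      ((cpair.comp (Computable.const h')
        (cpair.comp (hKc.comp Computable.fst) Computable.snd)).to₂)
  obtain ⟨k2, hk2c, hk2⟩ := smn hk2part
  obtain ⟨u, hu⟩ := exists_code_ap (F := fun e => Part.some (k2 e))
    (Computable.partrec hk2c)
  refine ⟨u, fun e w A hA hAe => ?_⟩
  obtain ⟨⟨c, hc, B, hB, hdom⟩, rfl⟩ := mem_weih.1 hA
  refine ⟨k2 e, by rw [hu]; exact Part.mem_some _, Nat.pair h' (Nat.pair (K e) w),
    by rw [hk2]; exact Part.mem_some _, ?_⟩
  refine ⟨_, mem_weih.2 ⟨?_, rfl⟩, ?_⟩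
  · refine ⟨c, ?_, B, hB, fun y hy => ?_⟩
    · simp only [Nat.unpair_pair]
      rw [hh']
      exact hc
    · simp only [Nat.unpair_pair]
      rw [hK]
      simp only [Nat.unpair_pair]
      have h1 := hdom y hy
      have h2 := hAe _ ⟨c, hc, B, hB, y, hy, Part.get_mem h1⟩
      exact Part.dom_iff_mem.2
        ⟨_, Part.mem_bind_iff.2 ⟨_, Part.get_mem h1, Part.get_mem h2⟩⟩
  · rintro z ⟨c', hc', B', hB', y, hy, hz⟩
    simp only [Nat.unpair_pair] at hc' hB' hz
    rw [hh'] at hc'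
    rw [hK] at hz
    simp only [Nat.unpair_pair] at hz
    obtain ⟨a, ha, hza⟩ := Part.mem_bind_iff.1 hz
    exact ⟨a, ⟨c', hc', B', hB', y, hy, ha⟩, hza⟩

end Main3
/-- For `g` computably transparent and inflationary, `f ≤_m g ↔ f ≤_pW g`;
moreover `f ≡_pW pWeih f` and `pWeih f` is computably transparent and inflationary.
Hence the many-one degrees of computably transparent, inflationary partial
multifunctions are isomorphic to the pointed Weihrauch degrees. -/
theorem pointed_weihrauch_correspondence :
    (∀ f g : Multifun, Transparent g → Inflationary g → (mRed f g ↔ pwRed f g)) ∧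
    (∀ f : Multifun, pwRed f (pWeih f) ∧ pwRed (pWeih f) f ∧
      Transparent (pWeih f) ∧ Inflationary (pWeih f)) := by
  refine ⟨fun f g hT hI => ⟨fun h => mRed_to_pwRed h, fun h => pwRed_to_mRed hT hI h⟩,
    fun f => ⟨pwRed_f_pWeih f, pwRed_pWeih_f f, transparent_pWeih f, inflationary_pWeih f⟩⟩

end KleeneOracle
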